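/- Let P ∈ ℝ^{n×n} be symmetric positive definite, A ∈ ℝ^{n×n}, B ∈ ℝ^{n×m}, η, θ > 0 with AP + PAᵀ − ηBBᵀ + θP ⪯ 0. Let S ∈ ℝ^{(N−1)×(N−1)} be symmetric with λ_min(S) ≥ η, and set K = −BᵀP⁻¹. Then the symmetric matrix M = I_{N−1} ⊗ (AP + PAᵀ) − S ⊗ (BBᵀ) satisfies M ⪯ −θ (I_{N−1} ⊗ P). -/

import Mathlib

open Matrix Kronecker

lemma kron_posSemidef {a b : Type*} [Fintype a] [Fintype b] [DecidableEq a] [DecidableEq b]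
    {X : Matrix a a ℝ} {Y : Matrix b b ℝ}
    (hX : X.PosSemidef) (hY : Y.PosSemidef) : (X ⊗ₖ Y).PosSemidef := by
  exact hX.kronecker hY

theorem stmt_11 (n mdim N : ℕ) (P A : Matrix (Fin n) (Fin n) ℝ)
    (B : Matrix (Fin n) (Fin mdim) ℝ)
    (hP : P.PosDef) (η θ : ℝ) (hη : 0 < η) (hθ : 0 < θ)
    (hLMI : (-(A * P + P * Aᵀ - η • (B * Bᵀ) + θ • P)).PosSemidef)
    (S : Matrix (Fin N) (Fin N) ℝ) (hS : S.IsHermitian)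
    (hmin : ∀ i, η ≤ hS.eigenvalues i) :
    (-((1 : Matrix (Fin N) (Fin N) ℝ) ⊗ₖ (A * P + P * Aᵀ) - S ⊗ₖ (B * Bᵀ)
      + θ • ((1 : Matrix (Fin N) (Fin N) ℝ) ⊗ₖ P))).PosSemidef := by
  -- S - η • 1 is PSD
  set U : Matrix (Fin N) (Fin N) ℝ := (hS.eigenvectorUnitary : Matrix (Fin N) (Fin N) ℝ)
  have hUU : U * star U = 1 := Matrix.mem_unitaryGroup_iff.mp hS.eigenvectorUnitary.2
  have hSη : (S - η • 1).PosSemidef := by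
    have hdec : S - η • 1 = U * Matrix.diagonal (fun i => hS.eigenvalues i - η) * star U := by
      have : Matrix.diagonal (fun i => hS.eigenvalues i - η)
          = Matrix.diagonal (RCLike.ofReal ∘ hS.eigenvalues) - η • 1 := by
        ext i j
        by_cases hij : i = j <;>
          simp [Matrix.diagonal, Matrix.one_apply, hij]
      have hsp := hS.spectral_theorem
      rw [Unitary.conjStarAlgAut_apply] at hsp
      rw [this, mul_sub, sub_mul, ← hsp]
      congr 1
      rw [mul_smul_comm, mul_one, smul_mul_assoc, hUU]
    rw [hdec]
    refine (Matrix.posSemidef_diagonal_iff.mpr ?_).mul_mul_conjTranspose_same U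
    intro i
    simp [sub_nonneg, hmin i]
  have hBBt : (B * Bᵀ).PosSemidef := by
    rw [← Matrix.conjTranspose_eq_transpose_of_trivial]
    exact Matrix.posSemidef_self_mul_conjTranspose B
  have key : (-((1 : Matrix (Fin N) (Fin N) ℝ) ⊗ₖ (A * P + P * Aᵀ) - S ⊗ₖ (B * Bᵀ)
      + θ • ((1 : Matrix (Fin N) (Fin N) ℝ) ⊗ₖ P)))
      = (1 : Matrix (Fin N) (Fin N) ℝ) ⊗ₖ (-(A * P + P * Aᵀ - η • (B * Bᵀ) + θ • P))
        + (S - η • (1 : Matrix (Fin N) (Fin N) ℝ)) ⊗ₖ (B * Bᵀ) := by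
    ext i j
    simp only [Matrix.kroneckerMap_apply, Matrix.neg_apply, Matrix.sub_apply,
      Matrix.add_apply, Matrix.smul_apply, smul_eq_mul]
    ring
  rw [key]
  exact (kron_posSemidef Matrix.PosSemidef.one hLMI).add (kron_posSemidef hSη hBBt)
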